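/- Let v, w ∈ ℂ with w ≠ 0 and 0 < Re(v/w) < 1, and let x, x' be real numbers in (0,1). Set a := v/w. Then ∑_{k=0}^∞ x^k/(v + k w) + ∑_{k=1}^∞ x'^k/(v − k w) = (x^{−a}/w) · [ ∫_0^x y^{a−1}/(1 − y) dy + (x x')^{a} · ∫_{1/x'}^∞ y^{a−1}/(1 − y) dy ], where both series converge absolutely, both integrals converge absolutely (the first since Re a > 0, the second since Re a < 1 and 1/x' > 1), and complex powers of positive real numbers are taken with the principal branch (y^{a−1} := e^{(a−1)·log y} for y > 0). -/

import Mathlib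

open MeasureTheory Real Filter

theorem stmt17 (v w : ℂ) (hw : w ≠ 0) (h0 : 0 < (v / w).re) (h1 : (v / w).re < 1)
    (x x' : ℝ) (hx0 : 0 < x) (hx1 : x < 1) (hx'0 : 0 < x') (hx'1 : x' < 1) :
    Summable (fun k : ℕ => ‖(x : ℂ) ^ k / (v + (k : ℂ) * w)‖) ∧
    Summable (fun k : ℕ => ‖(x' : ℂ) ^ (k + 1) / (v - ((k : ℂ) + 1) * w)‖) ∧
    IntervalIntegrable (fun y : ℝ => (y : ℂ) ^ (v / w - 1) / (1 - (y : ℂ))) volume 0 x ∧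
    IntegrableOn (fun y : ℝ => (y : ℂ) ^ (v / w - 1) / (1 - (y : ℂ)))
      (Set.Ioi (1 / x')) ∧
    (∑' k : ℕ, (x : ℂ) ^ k / (v + (k : ℂ) * w)) +
        (∑' k : ℕ, (x' : ℂ) ^ (k + 1) / (v - ((k : ℂ) + 1) * w)) =
      ((x : ℂ) ^ (-(v / w)) / w) *
        ((∫ y in (0 : ℝ)..x, (y : ℂ) ^ (v / w - 1) / (1 - (y : ℂ))) +
          ((x * x' : ℝ) : ℂ) ^ (v / w) *
            ∫ y in Set.Ioi (1 / x' : ℝ), (y : ℂ) ^ (v / w - 1) / (1 - (y : ℂ))) := by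
  set a : ℂ := v / w with ha
  have hwa : w * a = v := mul_div_cancel₀ v hw
  set c : ℝ := 1 / x' with hc
  have hc1 : 1 < c := one_lt_one_div hx'0 hx'1
  have hc0 : 0 < c := lt_trans one_pos hc1
  have hxc : (x : ℂ) ≠ 0 := Complex.ofReal_ne_zero.mpr hx0.ne'
  have hx'c : (x' : ℂ) ≠ 0 := Complex.ofReal_ne_zero.mpr hx'0.ne'
  have hak : ∀ k : ℕ, a + (k : ℂ) ≠ 0 := by
    intro k h
    have h' : (a + (k : ℂ)).re = 0 := by rw [h, Complex.zero_re]
    rw [Complex.add_re, Complex.natCast_re] at h'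
    have : (0:ℝ) ≤ (k:ℝ) := Nat.cast_nonneg k
    linarith
  have hak' : ∀ k : ℕ, a - 1 - (k : ℂ) ≠ 0 := by
    intro k h
    have h' : (a - 1 - (k : ℂ)).re = 0 := by rw [h, Complex.zero_re]
    simp only [Complex.sub_re, Complex.one_re, Complex.natCast_re] at h'
    have : (0:ℝ) ≤ (k:ℝ) := Nat.cast_nonneg k
    linarith
  have hwk : ∀ k : ℕ, w * (a + (k : ℂ)) = v + (k : ℂ) * w := by
    intro k; rw [mul_add, hwa]; ring
  have hwk' : ∀ k : ℕ, w * (a - 1 - (k : ℂ)) = v - ((k : ℂ) + 1) * w := by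
    intro k; rw [mul_sub, mul_sub, hwa]; ring
  have hvk : ∀ k : ℕ, v + (k : ℂ) * w ≠ 0 := by
    intro k; rw [← hwk k]; exact mul_ne_zero hw (hak k)
  have hvk' : ∀ k : ℕ, v - ((k : ℂ) + 1) * w ≠ 0 := by
    intro k; rw [← hwk' k]; exact mul_ne_zero hw (hak' k)
  -- Goal 1: summability
  have S1 : Summable (fun k : ℕ => ‖(x : ℂ) ^ k / (v + (k : ℂ) * w)‖) := by
    apply Summable.of_nonneg_of_le (fun k => norm_nonneg _)
      (f := fun k : ℕ => x ^ k * (‖w‖ * a.re)⁻¹)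
    · intro k
      rw [norm_div, norm_pow, Complex.norm_real, Real.norm_of_nonneg hx0.le]
      rw [← hwk k, norm_mul]
      have h1' : ‖w‖ * a.re ≤ ‖w‖ * ‖a + (k:ℂ)‖ := by
        apply mul_le_mul_of_nonneg_left _ (norm_nonneg w)
        calc a.re ≤ (a + (k:ℂ)).re := by
              simp only [Complex.add_re, Complex.natCast_re]
              have : (0:ℝ) ≤ (k:ℝ) := Nat.cast_nonneg k
              linarith
          _ ≤ |(a + (k:ℂ)).re| := le_abs_self _
          _ ≤ ‖a + (k:ℂ)‖ := Complex.abs_re_le_norm _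
      have hpos : 0 < ‖w‖ * a.re :=
        mul_pos (norm_pos_iff.mpr hw) h0
      rw [div_eq_mul_inv]
      exact mul_le_mul_of_nonneg_left
        (inv_anti₀ hpos h1') (pow_nonneg hx0.le k)
    · exact (summable_geometric_of_lt_one hx0.le hx1).mul_right _
  have S2 : Summable (fun k : ℕ => ‖(x' : ℂ) ^ (k + 1) / (v - ((k : ℂ) + 1) * w)‖) := by
    apply Summable.of_nonneg_of_le (fun k => norm_nonneg _)
      (f := fun k : ℕ => x' ^ (k+1) * (‖w‖ * (1 - a.re))⁻¹)
    · intro k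
      rw [norm_div, norm_pow, Complex.norm_real, Real.norm_of_nonneg hx'0.le]
      rw [← hwk' k, norm_mul]
      have h1' : ‖w‖ * (1 - a.re) ≤ ‖w‖ * ‖a - 1 - (k:ℂ)‖ := by
        apply mul_le_mul_of_nonneg_left _ (norm_nonneg w)
        calc 1 - a.re ≤ -((a - 1 - (k:ℂ)).re) := by
              simp only [Complex.sub_re, Complex.one_re, Complex.natCast_re]
              have : (0:ℝ) ≤ (k:ℝ) := Nat.cast_nonneg k
              linarith
          _ ≤ |(a - 1 - (k:ℂ)).re| := neg_le_abs _
          _ ≤ ‖a - 1 - (k:ℂ)‖ := Complex.abs_re_le_norm _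
      have hpos : 0 < ‖w‖ * (1 - a.re) :=
        mul_pos (norm_pos_iff.mpr hw) (by linarith)
      rw [div_eq_mul_inv]
      exact mul_le_mul_of_nonneg_left
        (inv_anti₀ hpos h1') (pow_nonneg hx'0.le _)
    · exact ((summable_geometric_of_lt_one hx'0.le hx'1).mul_right
        ((‖w‖ * (1 - a.re))⁻¹)).comp_injective (add_left_injective 1) |>.congr (by
          intro k; simp)
  -- Goal 3: interval integrability on [0, x]
  have I3 : IntegrableOn (fun y : ℝ => (y : ℂ) ^ (a - 1) / (1 - (y : ℂ)))
      (Set.Ioc 0 x) := by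
    have hg : IntegrableOn (fun y : ℝ => (y : ℂ) ^ (a - 1)) (Set.Ioc 0 x) := by
      rw [← intervalIntegrable_iff_integrableOn_Ioc_of_le hx0.le]
      apply intervalIntegral.intervalIntegrable_cpow'
      simp only [Complex.sub_re, Complex.one_re]; linarith
    have hmeas : AEStronglyMeasurable (fun y : ℝ => (1 - (y : ℂ))⁻¹)
        (volume.restrict (Set.Ioc 0 x)) := by
      exact Measurable.aestronglyMeasurable (by fun_prop)
    have hbdd : ∀ᵐ (y : ℝ) ∂(volume.restrict (Set.Ioc 0 x)),
        ‖(1 - (y : ℂ))⁻¹‖ ≤ (1 - x)⁻¹ := by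
      filter_upwards [ae_restrict_mem measurableSet_Ioc] with y hy
      rw [norm_inv]
      have : (1 : ℂ) - (y:ℝ) = ((1 - y : ℝ) : ℂ) := by push_cast; ring
      rw [this, Complex.norm_real, Real.norm_of_nonneg (by linarith [hy.2] : (0:ℝ) ≤ 1 - y)]
      exact inv_anti₀ (by linarith) (by linarith [hy.2])
    have h' := Integrable.bdd_mul hg hmeas hbdd
    exact IntegrableOn.congr_fun h'
      (fun y _ => by simp [div_eq_mul_inv, mul_comm]) measurableSet_Ioc
  -- Goal 4: integrability on Ioi c
  have I4 : IntegrableOn (fun y : ℝ => (y : ℂ) ^ (a - 1) / (1 - (y : ℂ)))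
      (Set.Ioi c) := by
    have hg : IntegrableOn (fun y : ℝ => (y : ℂ) ^ (a - 2)) (Set.Ioi c) := by
      apply integrableOn_Ioi_cpow_of_lt _ hc0
      simp only [Complex.sub_re, Complex.re_ofNat]; linarith
    have hmeas : AEStronglyMeasurable (fun y : ℝ => (y:ℂ) / (1 - (y : ℂ)))
        (volume.restrict (Set.Ioi c)) := by
      exact Measurable.aestronglyMeasurable (by fun_prop)
    have hbdd : ∀ᵐ (y : ℝ) ∂(volume.restrict (Set.Ioi c)),
        ‖(y:ℂ) / (1 - (y : ℂ))‖ ≤ c / (c - 1) := by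
      filter_upwards [ae_restrict_mem measurableSet_Ioi] with y hy
      have hy1 : 1 < y := lt_trans hc1 hy
      rw [norm_div, Complex.norm_real, Real.norm_of_nonneg (by linarith)]
      have : (1 : ℂ) - (y:ℝ) = ((1 - y : ℝ) : ℂ) := by push_cast; ring
      rw [this, Complex.norm_real, Real.norm_of_nonpos (by linarith), neg_sub]
      have hcy : c < y := hy
      rw [div_le_div_iff₀ (by linarith) (by linarith)]
      nlinarith [hcy]
    have h' := Integrable.bdd_mul hg hmeas hbdd
    refine IntegrableOn.congr_fun h' (fun y hy => ?_) measurableSet_Ioi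
    have hy0 : (0:ℝ) < y := lt_trans hc0 hy
    have hyc : (y:ℂ) ≠ 0 := Complex.ofReal_ne_zero.mpr hy0.ne'
    have : (y:ℂ) ^ (a - 1) = (y:ℂ) ^ (a - 2) * (y:ℂ) := by
      rw [show a - 1 = (a - 2) + 1 by ring, Complex.cpow_add _ _ hyc, Complex.cpow_one]
    rw [this]; ring
  refine ⟨S1, S2, (intervalIntegrable_iff_integrableOn_Ioc_of_le hx0.le).mpr I3, I4, ?_⟩
  -- Step A: the first integral as a sum
  have hIoc : ∀ (y : ℝ), y ∈ Set.Ioc 0 x → (y:ℂ) ≠ 0 :=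
    fun y hy => Complex.ofReal_ne_zero.mpr hy.1.ne'
  have StepA : (∫ y in Set.Ioc (0:ℝ) x, (y : ℂ) ^ (a - 1) / (1 - (y : ℂ))) =
      ∑' k : ℕ, (x:ℂ) ^ (a + k) / (a + k) := by
    set F : ℕ → ℝ → ℂ := fun k y => (y:ℂ) ^ (a - 1) * (y:ℂ) ^ k with hF
    have hFcpow : ∀ k : ℕ, ∀ y ∈ Set.Ioc (0:ℝ) x, F k y = (y:ℂ) ^ (a - 1 + k) := by
      intro k y hy
      rw [hF]
      simp only
      rw [Complex.cpow_add _ _ (hIoc y hy), Complex.cpow_natCast]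
    have hFint : ∀ k : ℕ, IntegrableOn (F k) (Set.Ioc (0:ℝ) x) := by
      intro k
      have : IntegrableOn (fun y : ℝ => (y:ℂ) ^ (a - 1 + k)) (Set.Ioc (0:ℝ) x) := by
        rw [← intervalIntegrable_iff_integrableOn_Ioc_of_le hx0.le]
        apply intervalIntegral.intervalIntegrable_cpow'
        simp only [Complex.add_re, Complex.sub_re, Complex.one_re, Complex.natCast_re]
        have : (0:ℝ) ≤ (k:ℝ) := Nat.cast_nonneg k
        linarith
      exact IntegrableOn.congr_fun this (fun y hy => (hFcpow k y hy).symm) measurableSet_Ioc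
    have hnorm : ∀ k : ℕ, ∀ y ∈ Set.Ioc (0:ℝ) x, ‖F k y‖ = y ^ (a.re - 1) * y ^ k := by
      intro k y hy
      rw [hF]
      simp only [norm_mul, norm_pow, Complex.norm_real, 
        Complex.norm_cpow_eq_rpow_re_of_pos hy.1, Complex.sub_re, Complex.one_re,
        Complex.norm_real, abs_of_pos hy.1, Real.norm_of_nonneg hy.1.le]
    have hC : IntegrableOn (fun y : ℝ => y ^ (a.re - 1)) (Set.Ioc (0:ℝ) x) := by
      rw [← intervalIntegrable_iff_integrableOn_Ioc_of_le hx0.le]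
      exact intervalIntegral.intervalIntegrable_rpow' (by linarith)
    have hFsum : Summable fun k : ℕ =>
        ∫ y in Set.Ioc (0:ℝ) x, ‖F k y‖ := by
      apply Summable.of_nonneg_of_le
        (fun k => integral_nonneg (fun y => norm_nonneg _))
        (f := fun k : ℕ => (∫ y in Set.Ioc (0:ℝ) x, y ^ (a.re - 1)) * x ^ k)
      · intro k
        have hle : ∫ y in Set.Ioc (0:ℝ) x, ‖F k y‖ ≤
            ∫ y in Set.Ioc (0:ℝ) x, y ^ (a.re - 1) * x ^ k := by
          apply setIntegral_mono_on ((hFint k).norm) (hC.mul_const _) measurableSet_Ioc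
          intro y hy
          rw [hnorm k y hy]
          exact mul_le_mul_of_nonneg_left
            (pow_le_pow_left₀ hy.1.le hy.2 k)
            (Real.rpow_nonneg hy.1.le _)
        rwa [integral_mul_const] at hle
      · exact (summable_geometric_of_lt_one hx0.le hx1).mul_left _
    have key := integral_tsum_of_summable_integral_norm hFint hFsum
    have hptwise : ∀ y ∈ Set.Ioc (0:ℝ) x,
        (∑' k : ℕ, F k y) = (y:ℂ) ^ (a - 1) / (1 - (y:ℂ)) := by
      intro y hy
      rw [hF]
      simp only
      rw [tsum_mul_left, tsum_geometric_of_norm_lt_one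
        (by rw [Complex.norm_real, Real.norm_of_nonneg hy.1.le]; linarith [hy.2] : ‖(y:ℂ)‖ < 1),
        div_eq_mul_inv]
    have hterm : ∀ k : ℕ, (∫ y in Set.Ioc (0:ℝ) x, F k y) = (x:ℂ) ^ (a + k) / (a + k) := by
      intro k
      rw [setIntegral_congr_fun measurableSet_Ioc (hFcpow k)]
      rw [← intervalIntegral.integral_of_le hx0.le]
      rw [integral_cpow (Or.inl (by
        simp only [Complex.add_re, Complex.sub_re, Complex.one_re, Complex.natCast_re]
        have : (0:ℝ) ≤ (k:ℝ) := Nat.cast_nonneg k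
        linarith))]
      rw [show a - 1 + (k:ℂ) + 1 = a + k by ring, Complex.ofReal_zero,
        Complex.zero_cpow (hak k), sub_zero]
    calc (∫ y in Set.Ioc (0:ℝ) x, (y : ℂ) ^ (a - 1) / (1 - (y : ℂ)))
        = ∫ y in Set.Ioc (0:ℝ) x, (∑' k : ℕ, F k y) :=
          (setIntegral_congr_fun measurableSet_Ioc hptwise).symm
      _ = ∑' k : ℕ, (∫ y in Set.Ioc (0:ℝ) x, F k y) := key.symm
      _ = ∑' k : ℕ, (x:ℂ) ^ (a + k) / (a + k) := tsum_congr hterm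
  -- Step B: the second integral as a sum
  have StepB : (∫ y in Set.Ioi c, (y : ℂ) ^ (a - 1) / (1 - (y : ℂ))) =
      ∑' k : ℕ, (c:ℂ) ^ (a - 1 - k) / (a - 1 - k) := by
    set G : ℕ → ℝ → ℂ := fun k y => -((y:ℂ) ^ (a - 2) * ((y:ℂ)⁻¹) ^ k) with hG
    have hGcpow : ∀ k : ℕ, ∀ y ∈ Set.Ioi c, G k y = -((y:ℂ) ^ (a - 2 - k)) := by
      intro k y hy
      have hy0 : (0:ℝ) < y := lt_trans hc0 hy
      have hyc : (y:ℂ) ≠ 0 := Complex.ofReal_ne_zero.mpr hy0.ne'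
      rw [hG]
      simp only [neg_inj]
      rw [inv_pow, ← Complex.cpow_natCast, ← Complex.cpow_neg,
        ← Complex.cpow_add _ _ hyc, sub_eq_add_neg (a - 2) (k:ℂ)]
    have hGint : ∀ k : ℕ, IntegrableOn (G k) (Set.Ioi c) := by
      intro k
      have : IntegrableOn (fun y : ℝ => -((y:ℂ) ^ (a - 2 - k))) (Set.Ioi c) := by
        apply Integrable.neg
        apply integrableOn_Ioi_cpow_of_lt _ hc0
        simp only [Complex.sub_re, Complex.re_ofNat, Complex.natCast_re]
        have : (0:ℝ) ≤ (k:ℝ) := Nat.cast_nonneg k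
        linarith
      exact IntegrableOn.congr_fun this (fun y hy => (hGcpow k y hy).symm) measurableSet_Ioi
    have hnorm : ∀ k : ℕ, ∀ y ∈ Set.Ioi c, ‖G k y‖ = y ^ (a.re - 2) * (y⁻¹) ^ k := by
      intro k y hy
      have hy0 : (0:ℝ) < y := lt_trans hc0 hy
      rw [hG]
      simp only [norm_neg, norm_mul, norm_pow, norm_inv, Complex.norm_real,
        Complex.norm_cpow_eq_rpow_re_of_pos hy0, Complex.sub_re,
        Complex.re_ofNat, Complex.norm_real, abs_of_pos hy0, Real.norm_of_nonneg hy0.le]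
    have hC : IntegrableOn (fun y : ℝ => y ^ (a.re - 2)) (Set.Ioi c) :=
      integrableOn_Ioi_rpow_of_lt (by linarith) hc0
    have hGsum : Summable fun k : ℕ => ∫ y in Set.Ioi c, ‖G k y‖ := by
      apply Summable.of_nonneg_of_le
        (fun k => integral_nonneg (fun y => norm_nonneg _))
        (f := fun k : ℕ => (∫ y in Set.Ioi c, y ^ (a.re - 2)) * x' ^ k)
      · intro k
        have hle : ∫ y in Set.Ioi c, ‖G k y‖ ≤
            ∫ y in Set.Ioi c, y ^ (a.re - 2) * x' ^ k := by
          apply setIntegral_mono_on ((hGint k).norm) (hC.mul_const _) measurableSet_Ioi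
          intro y hy
          have hy0 : (0:ℝ) < y := lt_trans hc0 hy
          rw [hnorm k y hy]
          apply mul_le_mul_of_nonneg_left _ (Real.rpow_nonneg hy0.le _)
          apply pow_le_pow_left₀ (inv_nonneg.mpr hy0.le)
          rw [hc] at hy
          rw [show x' = (1/x')⁻¹ by field_simp]
          exact inv_anti₀ (by positivity) (le_of_lt hy)
        rwa [integral_mul_const] at hle
      · exact (summable_geometric_of_lt_one hx'0.le hx'1).mul_left _
    have key := integral_tsum_of_summable_integral_norm hGint hGsum
    have hptwise : ∀ y ∈ Set.Ioi c,
        (∑' k : ℕ, G k y) = (y:ℂ) ^ (a - 1) / (1 - (y:ℂ)) := by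
      intro y hy
      have hy1 : (1:ℝ) < y := lt_trans hc1 hy
      have hy0 : (0:ℝ) < y := lt_trans one_pos hy1
      have hyc : (y:ℂ) ≠ 0 := Complex.ofReal_ne_zero.mpr hy0.ne'
      have hy1c : 1 - (y:ℂ) ≠ 0 := by
        intro h
        have : (1:ℂ) = (y:ℝ) := by linear_combination h
        rw [Complex.ext_iff] at this
        simp only [Complex.one_re, Complex.ofReal_re] at this
        linarith [this.1]
      rw [hG, tsum_neg]
      rw [tsum_mul_left, tsum_geometric_of_norm_lt_one
        (by rw [norm_inv, Complex.norm_real, Real.norm_of_nonneg hy0.le]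
            rw [inv_lt_one_iff₀]; right; exact hy1 : ‖(y:ℂ)⁻¹‖ < 1)]
      have hsplit : (y:ℂ) ^ (a - 1) = (y:ℂ) ^ (a - 2) * (y:ℂ) := by
        rw [show a - 1 = (a - 2) + 1 by ring, Complex.cpow_add _ _ hyc, Complex.cpow_one]
      rw [hsplit]
      have hys : (y:ℂ) - 1 ≠ 0 := sub_ne_zero.mpr (Ne.symm (sub_ne_zero.mp hy1c))
      have hinv : (1 - (y:ℂ)⁻¹)⁻¹ = (y:ℂ) / ((y:ℂ) - 1) := by
        rw [show (1 : ℂ) - (y:ℂ)⁻¹ = ((y:ℂ) - 1) / (y:ℂ) by field_simp, inv_div]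
      rw [hinv, show (1:ℂ) - (y:ℂ) = -((y:ℂ) - 1) by ring, div_neg]
      ring
    have hterm : ∀ k : ℕ, (∫ y in Set.Ioi c, G k y) = (c:ℂ) ^ (a - 1 - k) / (a - 1 - k) := by
      intro k
      rw [setIntegral_congr_fun measurableSet_Ioi (hGcpow k), integral_neg]
      rw [integral_Ioi_cpow_of_lt (by
        simp only [Complex.sub_re, Complex.re_ofNat, Complex.natCast_re]
        have : (0:ℝ) ≤ (k:ℝ) := Nat.cast_nonneg k
        linarith) hc0]
      rw [show a - 2 - (k:ℂ) + 1 = a - 1 - k by ring]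
      ring
    calc (∫ y in Set.Ioi c, (y : ℂ) ^ (a - 1) / (1 - (y : ℂ)))
        = ∫ y in Set.Ioi c, (∑' k : ℕ, G k y) :=
          (setIntegral_congr_fun measurableSet_Ioi hptwise).symm
      _ = ∑' k : ℕ, (∫ y in Set.Ioi c, G k y) := key.symm
      _ = ∑' k : ℕ, (c:ℂ) ^ (a - 1 - k) / (a - 1 - k) := tsum_congr hterm
  -- Step C: termwise identities and assembly
  have T1 : ∀ k : ℕ, (x:ℂ) ^ k / (v + (k:ℂ) * w) =
      ((x:ℂ) ^ (-a) / w) * ((x:ℂ) ^ (a + k) / (a + k)) := by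
    intro k
    have e4 : (x:ℂ) ^ (-a) * (x:ℂ) ^ (a + (k:ℂ)) = (x:ℂ) ^ k := by
      rw [← Complex.cpow_add _ _ hxc, show -a + (a + (k:ℂ)) = (k:ℂ) by ring,
        Complex.cpow_natCast]
    calc (x:ℂ) ^ k / (v + (k:ℂ) * w)
        = ((x:ℂ) ^ (-a) * (x:ℂ) ^ (a + (k:ℂ))) / (w * (a + k)) := by rw [e4, hwk k]
      _ = ((x:ℂ) ^ (-a) / w) * ((x:ℂ) ^ (a + k) / (a + k)) := by
          rw [div_mul_div_comm]
  have hmulxx' : ((x * x' : ℝ) : ℂ) ^ a = (x:ℂ) ^ a * (x':ℂ) ^ a := by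
    push_cast
    exact Complex.mul_cpow_ofReal_nonneg hx0.le hx'0.le a
  have hcx' : (c : ℂ) = ((x' : ℂ))⁻¹ := by
    rw [hc]; push_cast; rw [one_div]
  have T2 : ∀ k : ℕ, (x':ℂ) ^ (k + 1) / (v - ((k:ℂ) + 1) * w) =
      ((x:ℂ) ^ (-a) / w) * (((x * x' : ℝ) : ℂ) ^ a *
        ((c:ℂ) ^ (a - 1 - k) / (a - 1 - k))) := by
    intro k
    have e1 : (x:ℂ) ^ (-a) * (x:ℂ) ^ a = 1 := by
      rw [← Complex.cpow_add _ _ hxc, neg_add_cancel, Complex.cpow_zero]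
    have e2 : (x':ℂ) ^ a * ((x':ℂ) ^ (a - 1 - (k:ℂ)))⁻¹ = (x':ℂ) ^ (k + 1) := by
      rw [← div_eq_mul_inv, ← Complex.cpow_sub _ _ hx'c,
        show a - (a - 1 - (k:ℂ)) = ((k + 1 : ℕ) : ℂ) by push_cast; ring,
        Complex.cpow_natCast]
    have e5 : ((c:ℂ)) ^ (a - 1 - (k:ℂ)) = ((x':ℂ) ^ (a - 1 - (k:ℂ)))⁻¹ := by
      rw [hcx', Complex.inv_cpow]
      rw [Complex.arg_ofReal_of_nonneg hx'0.le]
      exact (Real.pi_ne_zero).symm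
    rw [hmulxx', e5, ← hwk' k, ← mul_div_assoc, div_mul_div_comm,
      show (x:ℂ) ^ (-a) * ((x:ℂ) ^ a * (x':ℂ) ^ a * ((x':ℂ) ^ (a - 1 - (k:ℂ)))⁻¹) =
        ((x:ℂ) ^ (-a) * (x:ℂ) ^ a) * ((x':ℂ) ^ a * ((x':ℂ) ^ (a - 1 - (k:ℂ)))⁻¹) from by
          ring, e1, e2, one_mul]
  rw [intervalIntegral.integral_of_le hx0.le]
  rw [StepA, StepB]
  rw [tsum_congr T1, tsum_congr T2, tsum_mul_left, tsum_mul_left, tsum_mul_left]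
  ring
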